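/- Let m ≥ 1, let p : Fin (m+1) → ℝ^m be affinely independent, and let x lie in the convex hull of {p_0, …, p_m}. Define the barycentric weights w_j = A(Function.update p j x) / A(p) (ratios of sub-simplex volume to simplex volume). Then each w_j ≥ 0 and ∑_{j=0}^{m} w_j = 1. -/

import Mathlib

open MeasureTheory


lemma iteSum {n : ℕ} (j i : Fin n) (A : ℝ) (w : Fin n → ℝ) :
    (∑ k : Fin n, if k = j then A else if i = k then w k else 0) =
    A + if i = j then 0 else w i := by
  by_cases hij : i = j
  · subst hij
    have : ∀ k : Fin n, (if k = i then A else if i = k then w k else 0)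
        = if k = i then A else 0 := by
      intro k
      rcases eq_or_ne k i with rfl | hk
      · simp
      · rw [if_neg hk, if_neg (fun h => hk h.symm), if_neg hk]
    rw [Finset.sum_congr rfl fun k _ => this k]
    simp
  · have : ∀ k : Fin n, (if k = j then A else if i = k then w k else 0)
        = (if k = j then A else 0) + (if k = i then w i else 0) := by
      intro k
      rcases eq_or_ne k j with rfl | hk
      · rw [if_pos rfl, if_pos rfl, if_neg (fun h => hij (h.symm : i = k)), add_zero]
      · rcases eq_or_ne k i with rfl | hk2
        · simp [hk]
        · rw [if_neg hk, if_neg hk, if_neg (fun h => hk2 (h.symm : k = i)), if_neg hk2, add_zero]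
    rw [Finset.sum_congr rfl fun k _ => this k, Finset.sum_add_distrib]
    simp [hij]

lemma coordCalc {m : ℕ} (b : AffineBasis (Fin (m+1)) ℝ (EuclideanSpace ℝ (Fin m)))
    (x : EuclideanSpace ℝ (Fin m)) (j : Fin (m+1)) (w : Fin (m+1) → ℝ)
    (hw : ∑ i, w i = 1) (i : Fin (m+1)) :
    b.coord i (Finset.univ.affineCombination ℝ (Function.update (⇑b) j x) w)
      = w j * b.coord i x + (if i = j then 0 else w i) := by
  rw [Finset.map_affineCombination _ _ _ hw,
    Finset.univ.affineCombination_eq_linear_combination _ _ hw]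
  have h1 : ∀ k : Fin (m+1), w k • (⇑(b.coord i) ∘ Function.update (⇑b) j x) k
      = if k = j then w j * b.coord i x else (if i = k then w k else 0) := by
    intro k
    by_cases hk : k = j
    · subst hk; simp [Function.update_self]
    · simp only [Function.comp_apply, Function.update_of_ne hk, b.coord_apply, hk, if_neg hk]
      by_cases hik : i = k <;> simp [hik, smul_eq_mul]
  rw [Finset.sum_congr rfl fun k _ => h1 k, iteSum]

/-- members of a sub-simplex: existence of weights and coordinate formula -/
lemma memSub {m : ℕ} (b : AffineBasis (Fin (m+1)) ℝ (EuclideanSpace ℝ (Fin m)))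
    (x y : EuclideanSpace ℝ (Fin m)) (j : Fin (m+1))
    (hy : y ∈ convexHull ℝ (Set.range (Function.update (⇑b) j x))) :
    ∃ w : Fin (m+1) → ℝ, (∀ i, 0 ≤ w i) ∧ (∑ i, w i = 1) ∧
      ∀ i, b.coord i y = w j * b.coord i x + (if i = j then 0 else w i) := by
  rw [convexHull_range_eq_exists_affineCombination] at hy
  obtain ⟨s, w, hw0, hw1, hcomb⟩ := hy
  refine ⟨Set.indicator ↑s w, fun i => ?_, ?_, fun i => ?_⟩
  · by_cases hi : i ∈ s
    · simp [Set.indicator_of_mem, hi, hw0 i hi]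
    · simp [Set.indicator_of_notMem, hi]
  · rw [Finset.sum_indicator_subset w (Finset.subset_univ s)]; exact hw1
  · rw [← hcomb, Finset.affineCombination_indicator_subset _ _ (Finset.subset_univ s)]
    exact coordCalc b x j _
      (by rw [Finset.sum_indicator_subset w (Finset.subset_univ s)]; exact hw1) i

/-- covering: every point of the simplex lies in some sub-simplex -/
lemma memCover {m : ℕ} (b : AffineBasis (Fin (m+1)) ℝ (EuclideanSpace ℝ (Fin m)))
    (x : EuclideanSpace ℝ (Fin m)) (hx : x ∈ convexHull ℝ (Set.range ⇑b))
    (y : EuclideanSpace ℝ (Fin m)) (hy : y ∈ convexHull ℝ (Set.range ⇑b)) :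
    ∃ j, y ∈ convexHull ℝ (Set.range (Function.update (⇑b) j x)) := by
  rw [b.convexHull_eq_nonneg_coord] at hx hy
  set c : Fin (m+1) → ℝ := fun i => b.coord i x with hc
  set β : Fin (m+1) → ℝ := fun i => b.coord i y with hβ
  have hcs : ∑ i, c i = 1 := b.sum_coord_apply_eq_one x
  have hβs : ∑ i, β i = 1 := b.sum_coord_apply_eq_one y
  have hT : (Finset.univ.filter (fun i => 0 < c i)).Nonempty := by
    by_contra h
    rw [Finset.not_nonempty_iff_eq_empty, Finset.filter_eq_empty_iff] at h
    have : ∀ i : Fin (m+1), c i = 0 := fun i => le_antisymm (not_lt.mp (h (Finset.mem_univ i))) (hx i)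
    rw [Finset.sum_congr rfl fun i _ => this i] at hcs
    simp at hcs
  obtain ⟨j, hjT, hjmin⟩ := Finset.exists_min_image _ (fun i => β i / c i) hT
  have hcj : 0 < c j := (Finset.mem_filter.mp hjT).2
  set t : ℝ := β j / c j with ht
  have ht0 : 0 ≤ t := div_nonneg (hy j) hcj.le
  have htcj : t * c j = β j := div_mul_cancel₀ _ hcj.ne'
  set w : Fin (m+1) → ℝ := fun i => if i = j then t else β i - t * c i with hw
  have hw0 : ∀ i, 0 ≤ w i := by
    intro i
    rcases eq_or_ne i j with rfl | hij
    · simpa [hw] using ht0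
    · rw [hw]
      simp only [if_neg hij]
      rcases lt_or_ge 0 (c i) with hci | hci
      · have := hjmin i (Finset.mem_filter.mpr ⟨Finset.mem_univ i, hci⟩)
        rw [div_le_div_iff₀ hcj hci] at this
        nlinarith
      · have : c i = 0 := le_antisymm hci (hx i)
        simpa [this] using hy i
  have hw1 : ∑ i, w i = 1 := by
    rw [← Finset.add_sum_erase _ w (Finset.mem_univ j)]
    have h1 : ∑ i ∈ Finset.univ.erase j, w i = ∑ i ∈ Finset.univ.erase j, (β i - t * c i) :=
      Finset.sum_congr rfl fun i hi => by
        rw [hw]; simp [Finset.ne_of_mem_erase hi]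
    rw [h1, Finset.sum_sub_distrib, ← Finset.mul_sum,
      Finset.sum_erase_eq_sub (Finset.mem_univ j), Finset.sum_erase_eq_sub (Finset.mem_univ j),
      hβs, hcs]
    have : w j = t := by rw [hw]; simp
    rw [this]
    linear_combination htcj
  refine ⟨j, ?_⟩
  have hrep : y = Finset.univ.affineCombination ℝ (Function.update (⇑b) j x) w := by
    apply b.ext_elem
    intro i
    rw [coordCalc b x j w hw1 i]
    rcases eq_or_ne i j with rfl | hij
    · have : w i = t := by rw [hw]; simp
      rw [if_pos rfl, this, add_zero, htcj]
    · have h2 : w i = β i - t * c i := by rw [hw]; simp [hij]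
      have h3 : w j = t := by rw [hw]; simp
      rw [if_neg hij, h2, h3]
      show β i = t * c i + (β i - t * c i)
      ring
  rw [hrep]
  exact affineCombination_mem_convexHull (fun i _ => hw0 i) hw1

/-- The `m`-dimensional volume of the convex hull of the range of a family of points
in `ℝ^m` (the "area" `A(p)` of the simplex with vertices `p`). -/
noncomputable def simVol {m : ℕ} (p : Fin (m + 1) → EuclideanSpace ℝ (Fin m)) : ℝ :=
  (volume (convexHull ℝ (Set.range p))).toReal

/-- Eq. (17): the barycentric weights `w_j = A(update p j x) / A(p)` of a point `x`
inside the simplex are nonnegative and sum to one. -/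
theorem barycentric_weights_nonneg_sum_one {m : ℕ} (hm : 1 ≤ m)
    (p : Fin (m + 1) → EuclideanSpace ℝ (Fin m)) (hp : AffineIndependent ℝ p)
    (x : EuclideanSpace ℝ (Fin m)) (hx : x ∈ convexHull ℝ (Set.range p)) :
    (∀ j : Fin (m + 1), 0 ≤ simVol (Function.update p j x) / simVol p) ∧
      ∑ j : Fin (m + 1), simVol (Function.update p j x) / simVol p = 1 := by
  classical
  have htop : affineSpan ℝ (Set.range p) = ⊤ := by
    rw [hp.affineSpan_eq_top_iff_card_eq_finrank_add_one]
    simp [finrank_euclideanSpace_fin]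
  let b : AffineBasis (Fin (m+1)) ℝ (EuclideanSpace ℝ (Fin m)) := ⟨p, hp, htop⟩
  have hbp : ⇑b = p := rfl
  set S : Set (EuclideanSpace ℝ (Fin m)) := convexHull ℝ (Set.range p) with hS
  set Sj : Fin (m+1) → Set (EuclideanSpace ℝ (Fin m)) :=
    fun j => convexHull ℝ (Set.range (Function.update p j x)) with hSj
  have hsub : ∀ j, Sj j ⊆ S := by
    intro j
    apply convexHull_min _ (convex_convexHull ℝ _)
    rintro _ ⟨k, rfl⟩
    rcases eq_or_ne k j with rfl | hk
    · rw [Function.update_self]; exact hx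
    · rw [Function.update_of_ne hk]; exact subset_convexHull ℝ _ ⟨k, rfl⟩
  have hcover : S = ⋃ j, Sj j := by
    apply Set.Subset.antisymm
    · intro y hy
      obtain ⟨j, hj⟩ := memCover b x (by rw [hbp]; exact hx) y (by rw [hbp]; exact hy)
      rw [hbp] at hj
      exact Set.mem_iUnion.mpr ⟨j, hj⟩
    · exact Set.iUnion_subset hsub
  set c : Fin (m+1) → ℝ := fun i => b.coord i x with hc
  have hc0 : ∀ i, 0 ≤ c i := by
    have h : x ∈ convexHull ℝ (Set.range ⇑b) := hx
    rw [b.convexHull_eq_nonneg_coord] at h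
    exact h
  have hScpt : IsCompact S := (Set.finite_range _).isCompact_convexHull ℝ
  have hcpt : ∀ j, IsCompact (Sj j) := fun j => (Set.finite_range _).isCompact_convexHull ℝ
  have hmeas : ∀ j, NullMeasurableSet (Sj j) volume :=
    fun j => ((hcpt j).isClosed.measurableSet).nullMeasurableSet
  have hplane : ∀ (g : (EuclideanSpace ℝ (Fin m)) →ᵃ[ℝ] ℝ) (z : EuclideanSpace ℝ (Fin m)),
      g z ≠ 0 → volume {y | g y = 0} = 0 := by
    intro g z hz
    have hmem : ∀ y, (y ∈ AffineSubspace.comap g (AffineSubspace.mk' (0:ℝ)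
        (⊥ : Submodule ℝ ℝ)) ↔ g y = 0) := by
      intro y
      rw [AffineSubspace.mem_comap, AffineSubspace.mem_mk']
      simp [sub_eq_zero]
    have h1 : {y | g y = 0} = (AffineSubspace.comap g
        (AffineSubspace.mk' (0:ℝ) (⊥ : Submodule ℝ ℝ)) : Set (EuclideanSpace ℝ (Fin m))) := by
      ext y
      rw [Set.mem_setOf_eq, SetLike.mem_coe, hmem]
    rw [h1]
    apply MeasureTheory.Measure.addHaar_affineSubspace
    intro h
    exact hz ((hmem z).mp (h ▸ AffineSubspace.mem_top ℝ _ z))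
  have hkey : ∀ j y, y ∈ Sj j → ∃ w : Fin (m+1) → ℝ, (∀ i, 0 ≤ w i) ∧
      ∀ i, b.coord i y = w j * c i + (if i = j then 0 else w i) := by
    intro j y hy
    rw [hSj, ← hbp] at hy
    obtain ⟨w, hw0, _, hwc⟩ := memSub b x y j hy
    exact ⟨w, hw0, hwc⟩
  have hnull0 : ∀ j, c j = 0 → volume (Sj j) = 0 := by
    intro j hcj
    apply measure_mono_null (?_ : Sj j ⊆ {y | (b.coord j) y = 0})
    · exact hplane (b.coord j) (p j) (by rw [← hbp, b.coord_apply]; simp)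
    · intro y hy
      obtain ⟨w, hw0, hwc⟩ := hkey j y hy
      have h := hwc j
      rw [if_pos rfl, add_zero, hcj, mul_zero] at h
      exact h
  have hdisj : Pairwise (Function.onFun (AEDisjoint volume) Sj) := by
    intro j k hjk
    rcases eq_or_lt_of_le (hc0 j) with hcj | hcj
    · exact measure_mono_null Set.inter_subset_left (hnull0 j hcj.symm)
    · rcases eq_or_lt_of_le (hc0 k) with hck | hck
      · exact measure_mono_null Set.inter_subset_right (hnull0 k hck.symm)
      · set g : (EuclideanSpace ℝ (Fin m)) →ᵃ[ℝ] ℝ := c k • b.coord j - c j • b.coord k with hg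
        have hgapp : ∀ y, g y = c k * b.coord j y - c j * b.coord k y := by
          intro y; simp [hg, smul_eq_mul]
        apply measure_mono_null (?_ : Sj j ∩ Sj k ⊆ {y | g y = 0})
        · apply hplane g (p j)
          rw [hgapp, ← hbp, b.coord_apply, b.coord_apply, if_pos rfl,
            if_neg (fun h => hjk (h.symm : j = k))]
          simpa using hck.ne'
        · rintro y ⟨hyj, hyk⟩
          obtain ⟨w, hw0, hwc⟩ := hkey j y hyj
          obtain ⟨v, hv0, hvc⟩ := hkey k y hyk
          have h1 : b.coord j y = w j * c j := by
            have h := hwc j; rwa [if_pos rfl, add_zero] at h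
          have h2 : b.coord k y = w j * c k + w k := by
            have h := hwc k; rwa [if_neg (fun h' => hjk (h'.symm : j = k))] at h
          have h3 : b.coord k y = v k * c k := by
            have h := hvc k; rwa [if_pos rfl, add_zero] at h
          have h4 : b.coord j y = v k * c j + v j := by
            have h := hvc j; rwa [if_neg hjk] at h
          have e1 : g y = -(c j * w k) := by rw [hgapp, h1, h2]; ring
          have e2 : g y = c k * v j := by rw [hgapp, h3, h4]; ring
          have p1 : 0 ≤ c j * w k := mul_nonneg hcj.le (hw0 k)
          have p2 : 0 ≤ c k * v j := mul_nonneg hck.le (hv0 j)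
          show g y = 0
          linarith [e1, e2, p1, p2]
  have hvol : volume S = ∑ j, volume (Sj j) := by
    rw [hcover, measure_iUnion₀ hdisj hmeas, tsum_fintype]
  have hfin : volume S ≠ ⊤ := hScpt.measure_lt_top.ne
  have hpos : 0 < volume S := by
    have hne : (interior S).Nonempty :=
      interior_convexHull_nonempty_iff_affineSpan_eq_top.mpr htop
    exact lt_of_lt_of_le (isOpen_interior.measure_pos volume hne) (measure_mono interior_subset)
  have hpos' : 0 < simVol p := ENNReal.toReal_pos hpos.ne' hfin
  constructor
  · intro j; exact div_nonneg ENNReal.toReal_nonneg hpos'.le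
  · rw [← Finset.sum_div]
    have hsum : ∑ j, simVol (Function.update p j x) = simVol p := by
      show ∑ j, (volume (Sj j)).toReal = (volume S).toReal
      rw [hvol, ENNReal.toReal_sum]
      intro j _
      exact ((measure_mono (hsub j)).trans_lt hScpt.measure_lt_top).ne
    rw [hsum, div_self hpos'.ne']
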